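/- Let A ∈ ℝ^{n×n}, C ∈ ℝ^{m×n}, and L ∈ ℝ^{n×m}. Then A − LC is Schur stable (every eigenvalue has modulus strictly less than 1) if and only if there exist a symmetric positive definite P ∈ ℝ^{n×n} and K ∈ ℝ^{n×m} such that the 2×2 block matrix [[P, AᵀP − CᵀKᵀ], [PA − KC, P]] is positive definite and L = P⁻¹K. -/

import Mathlib

open Matrix Polynomial Filter

variable {n : ℕ}

lemma eval_charpoly (M : Matrix (Fin n) (Fin n) ℂ) (z : ℂ) :
    M.charpoly.eval z = (Matrix.scalar (Fin n) z - M).det := by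
  rw [Matrix.charpoly, ← Polynomial.coe_evalRingHom, RingHom.map_det]
  congr 1
  ext i j
  by_cases h : i = j <;>
    simp [h, charmatrix_apply_eq, charmatrix_apply_ne, Matrix.scalar_apply, Matrix.sub_apply,
      Matrix.diagonal_apply]

lemma mem_spectrum_iff_root (M : Matrix (Fin n) (Fin n) ℂ) (z : ℂ) :
    z ∈ spectrum ℂ M ↔ M.charpoly.IsRoot z := by
  rw [spectrum.mem_iff, Matrix.isUnit_iff_isUnit_det, isUnit_iff_ne_zero, not_ne_iff,
    Polynomial.IsRoot, eval_charpoly]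
  congr! 2

lemma exists_eigenvec (M : Matrix (Fin n) (Fin n) ℂ) (z : ℂ) (h : M.charpoly.IsRoot z) :
    ∃ v : Fin n → ℂ, v ≠ 0 ∧ M *ᵥ v = z • v := by
  have hdet : (Matrix.scalar (Fin n) z - M).det = 0 := by
    rw [← eval_charpoly]; exact h
  obtain ⟨v, hv, hv0⟩ := (Matrix.exists_mulVec_eq_zero_iff).mpr hdet
  refine ⟨v, hv, ?_⟩
  have : Matrix.scalar (Fin n) z *ᵥ v - M *ᵥ v = 0 := by rw [← Matrix.sub_mulVec]; exact hv0
  have h2 : Matrix.scalar (Fin n) z *ᵥ v = z • v := by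
    ext i; simp [Matrix.scalar_apply, Matrix.mulVec_diagonal]
  rw [h2] at this
  exact (sub_eq_zero.mp this).symm

lemma re_quad (S : Matrix (Fin n) (Fin n) ℝ) (v : Fin n → ℂ) :
    (dotProduct (star v) ((S.map (Complex.ofReal)) *ᵥ v)).re =
      dotProduct (fun i => (v i).re) (S *ᵥ fun i => (v i).re) +
      dotProduct (fun i => (v i).im) (S *ᵥ fun i => (v i).im) := by
  simp only [dotProduct, Matrix.mulVec, Pi.star_apply, Matrix.map_apply,
    Finset.mul_sum, Complex.re_sum, ← Finset.sum_add_distrib]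
  refine Finset.sum_congr rfl fun i _ => ?_
  refine Finset.sum_congr rfl fun j _ => ?_
  simp [Complex.mul_re, RCLike.star_def, Complex.conj_re, Complex.conj_im]

lemma re_quad_pos {S : Matrix (Fin n) (Fin n) ℝ} (hS : S.PosDef) {v : Fin n → ℂ} (hv : v ≠ 0) :
    0 < (dotProduct (star v) ((S.map (Complex.ofReal)) *ᵥ v)).re := by
  rw [re_quad]
  set x : Fin n → ℝ := fun i => (v i).re
  set y : Fin n → ℝ := fun i => (v i).im
  have hxy : x ≠ 0 ∨ y ≠ 0 := by
    by_contra h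
    push_neg at h
    apply hv
    funext i
    have h1 := congrFun h.1 i
    have h2 := congrFun h.2 i
    exact Complex.ext h1 h2
  have hx' : ∀ w : Fin n → ℝ, 0 ≤ dotProduct w (S *ᵥ w) := by
    intro w
    have := hS.posSemidef.dotProduct_mulVec_nonneg w
    simpa using this
  rcases hxy with h | h
  · have := hS.dotProduct_mulVec_pos (x := x) h
    have h2 := hx' y
    simp only [star_trivial] at this
    linarith
  · have := hS.dotProduct_mulVec_pos (x := y) h
    have h2 := hx' x
    simp only [star_trivial] at this
    linarith

/-- A real square matrix is Schur stable if every root in `ℂ` of its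
characteristic polynomial has modulus strictly less than 1. -/
def IsSchur {n : ℕ} (A : Matrix (Fin n) (Fin n) ℝ) : Prop :=
  ∀ z : ℂ, ((A.map (Complex.ofReal)).charpoly).IsRoot z → ‖z‖ < 1

lemma quad_conj (Q F : Matrix (Fin n) (Fin n) ℝ) (v : Fin n → ℂ) :
    dotProduct (star v) (((Fᵀ * Q * F).map Complex.ofReal) *ᵥ v) =
      dotProduct (star ((F.map Complex.ofReal) *ᵥ v))
        ((Q.map Complex.ofReal) *ᵥ ((F.map Complex.ofReal) *ᵥ v)) := by
  have hmap : (Fᵀ * Q * F).map Complex.ofReal =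
      (F.map Complex.ofReal)ᴴ * (Q.map Complex.ofReal) * (F.map Complex.ofReal) := by
    have hct : (F.map Complex.ofReal)ᴴ = Fᵀ.map Complex.ofReal := by
      ext i j
      simp [Matrix.conjTranspose_apply, Matrix.map_apply, Complex.conj_ofReal]
    rw [hct]
    ext i j
    simp only [Matrix.mul_apply, Matrix.map_apply, Matrix.transpose_apply, Finset.sum_mul]
    push_cast
    rfl
  rw [hmap]
  simp only [star_mulVec, Matrix.dotProduct_mulVec, vecMul_vecMul]

lemma schur_of_lyap {F P : Matrix (Fin n) (Fin n) ℝ} (hP : P.PosDef)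
    (hQ : (P - Fᵀ * P * F).PosDef) : IsSchur F := by
  intro z hz
  obtain ⟨v, hv, hvec⟩ := exists_eigenvec (F.map Complex.ofReal) z hz
  have h1 := re_quad_pos hQ hv
  have ha := re_quad_pos hP hv
  set q : ℂ := dotProduct (star v) ((P.map Complex.ofReal) *ᵥ v) with hq
  have h2 : dotProduct (star v) (((Fᵀ * P * F).map Complex.ofReal) *ᵥ v) =
      (Complex.normSq z : ℂ) * q := by
    rw [quad_conj, hvec, star_smul, smul_dotProduct, Matrix.mulVec_smul, dotProduct_smul,
      smul_eq_mul, smul_eq_mul, ← mul_assoc, Complex.star_def,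
      ← Complex.normSq_eq_conj_mul_self]
  have h3 : ((P - Fᵀ * P * F).map Complex.ofReal) = P.map Complex.ofReal -
      (Fᵀ * P * F).map Complex.ofReal := by
    ext i j; simp [Matrix.map_apply, Matrix.sub_apply]
  rw [h3, Matrix.sub_mulVec, dotProduct_sub, h2] at h1
  rw [Complex.sub_re, Complex.re_ofReal_mul] at h1
  have hs : Complex.normSq z < 1 := by
    have := ha
    nlinarith
  have habs : ‖z‖ ^ 2 < 1 := by rw [Complex.sq_norm]; exact hs
  nlinarith [norm_nonneg z]

lemma posDef_fromBlocks₂₂ {m l : Type*} [Fintype m] [Fintype l] [DecidableEq m] [DecidableEq l]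
    {A : Matrix m m ℝ} (B : Matrix m l ℝ) {D : Matrix l l ℝ} (hD : D.PosDef) [Invertible D] :
    (fromBlocks A B Bᴴ D).PosDef ↔ (A - B * D⁻¹ * Bᴴ).PosDef := by
  constructor
  · intro h
    refine PosDef.of_dotProduct_mulVec_pos ((Matrix.IsHermitian.fromBlocks₂₂ _ _ hD.1).mp h.1) fun x hx => ?_
    have hu : (Sum.elim x (-((D⁻¹ * Bᴴ) *ᵥ x)) : m ⊕ l → ℝ) ≠ 0 := by
      intro h0
      apply hx
      funext i
      exact congrFun h0 (Sum.inl i)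
    have := h.dotProduct_mulVec_pos hu
    rw [Matrix.dotProduct_mulVec, Matrix.schur_complement_eq₂₂ A B x _ hD.1] at this
    simp only [add_neg_cancel, star_zero, Matrix.zero_vecMul, zero_dotProduct, zero_add] at this
    rw [Matrix.dotProduct_mulVec]
    exact this
  · intro h
    refine PosDef.of_dotProduct_mulVec_pos ((Matrix.IsHermitian.fromBlocks₂₂ _ _ hD.1).mpr h.1) fun u hu => ?_
    rw [Matrix.dotProduct_mulVec, ← Sum.elim_comp_inl_inr u,
      Matrix.schur_complement_eq₂₂ A B _ _ hD.1]
    by_cases hx : u ∘ Sum.inl = 0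
    · have hy : u ∘ Sum.inr ≠ 0 := by
        intro h0
        apply hu
        funext i
        cases i with
        | inl i => exact congrFun hx i
        | inr i => exact congrFun h0 i
      have h2 := hD.dotProduct_mulVec_pos hy
      rw [Matrix.dotProduct_mulVec] at h2
      rw [hx]
      simpa [Matrix.mulVec_zero] using h2
    · have h1 := h.dotProduct_mulVec_pos hx
      have h2 : (0:ℝ) ≤ star ((D⁻¹ * Bᴴ) *ᵥ (u ∘ Sum.inl) + u ∘ Sum.inr) ᵥ* D ⬝ᵥ
          ((D⁻¹ * Bᴴ) *ᵥ (u ∘ Sum.inl) + u ∘ Sum.inr) := by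
        have := hD.posSemidef.dotProduct_mulVec_nonneg ((D⁻¹ * Bᴴ) *ᵥ (u ∘ Sum.inl) + u ∘ Sum.inr)
        rwa [Matrix.dotProduct_mulVec] at this
      rw [Matrix.dotProduct_mulVec] at h1
      linarith

lemma map_pow_ofReal (F : Matrix (Fin n) (Fin n) ℝ) (k : ℕ) :
    (F.map (Complex.ofReal)) ^ k = (F ^ k).map (Complex.ofReal) := by
  induction k with
  | zero =>
    ext i j
    simp only [pow_zero, Matrix.map_apply, Matrix.one_apply]
    split <;> simp
  | succ k ih =>
    rw [pow_succ, pow_succ, ih]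
    ext a b
    simp [Matrix.mul_apply, Matrix.map_apply]

lemma decay (F : Matrix (Fin n) (Fin n) ℝ)
    (hF : ∀ z : ℂ, ((F.map (Complex.ofReal)).charpoly).IsRoot z → ‖z‖ < 1) :
    ∃ r : ℝ, 0 ≤ r ∧ r < 1 ∧ ∃ N : ℕ, ∀ k, N ≤ k → ∀ i j, |(F ^ k) i j| ≤ r ^ k := by
  letI : NormedRing (Matrix (Fin n) (Fin n) ℂ) := Matrix.linftyOpNormedRing
  letI : NormedAlgebra ℂ (Matrix (Fin n) (Fin n) ℂ) := Matrix.linftyOpNormedAlgebra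
  letI : CompleteSpace (Matrix (Fin n) (Fin n) ℂ) := FiniteDimensional.complete ℂ _
  set G := F.map (Complex.ofReal) with hG
  have hspec : ∀ z ∈ spectrum ℂ G, ‖z‖₊ < 1 := by
    intro z hz
    have := hF z ((mem_spectrum_iff_root G z).mp hz)
    rw [← NNReal.coe_lt_coe]
    simpa [nnnorm] using this
  have hrad : spectralRadius ℂ G < 1 := by
    rcases (spectrum ℂ G).eq_empty_or_nonempty with h | h
    · simp [spectralRadius, h]
    · have := spectrum.spectralRadius_lt_of_forall_lt_of_nonempty h hspec
      simpa using this
  obtain ⟨x, hx1, hx2⟩ := exists_between hrad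
  lift x to NNReal using hx2.ne_top with r hr
  have hgel := spectrum.pow_nnnorm_pow_one_div_tendsto_nhds_spectralRadius G
  have hev : ∀ᶠ k : ℕ in atTop, (‖G ^ k‖₊ : ENNReal) ^ (1 / (k:ℕ) : ℝ) < (r : ENNReal) :=
    hgel.eventually_lt_const hx1
  obtain ⟨N, hN⟩ := hev.exists_forall_of_atTop
  refine ⟨r, r.coe_nonneg, by exact_mod_cast hx2, max N 1, fun k hk i j => ?_⟩
  have hk1 : 1 ≤ k := le_trans (le_max_right _ _) hk
  have hkN : N ≤ k := le_trans (le_max_left _ _) hk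
  have hklt := hN k hkN
  have hkne : (k : ℝ) ≠ 0 := by positivity
  have hnorm : ‖G ^ k‖₊ ≤ r ^ k := by
    have h1 := ENNReal.rpow_le_rpow hklt.le (le_of_lt (by positivity : (0:ℝ) < (k:ℝ)))
    rw [← ENNReal.rpow_mul, one_div, inv_mul_cancel₀ hkne, ENNReal.rpow_one,
      ENNReal.rpow_natCast, ← ENNReal.coe_pow] at h1
    exact_mod_cast h1
  -- entry bound
  have hentry : ‖(G ^ k) i j‖₊ ≤ ‖G ^ k‖₊ := by
    rw [Matrix.linfty_opNNNorm_def]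
    calc ‖(G ^ k) i j‖₊ ≤ ∑ j', ‖(G ^ k) i j'‖₊ :=
          Finset.single_le_sum (f := fun j' => ‖(G ^ k) i j'‖₊) (fun _ _ => zero_le) (Finset.mem_univ j)
      _ ≤ _ := Finset.le_sup (f := fun i => ∑ j', ‖(G ^ k) i j'‖₊) (Finset.mem_univ i)
  have hGk : G ^ k = (F ^ k).map (Complex.ofReal) := map_pow_ofReal F k
  have : ‖(G ^ k) i j‖₊ = ‖(F ^ k) i j‖₊ := by
    rw [hGk]
    simp [nnnorm, Matrix.map_apply]
  rw [this] at hentry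
  have := le_trans hentry hnorm
  calc |(F ^ k) i j| = ‖(F ^ k) i j‖ := (Real.norm_eq_abs _).symm
    _ ≤ ((r ^ k : NNReal) : ℝ) := by exact_mod_cast this
    _ = (r:ℝ) ^ k := by push_cast; ring

noncomputable def quadCLM (x : Fin n → ℝ) : Matrix (Fin n) (Fin n) ℝ →L[ℝ] ℝ :=
  LinearMap.toContinuousLinearMap
    { toFun := fun M => dotProduct x (M *ᵥ x)
      map_add' := by
        intro M N
        simp [Matrix.add_mulVec, dotProduct_add]
      map_smul' := by
        intro c M
        simp [Matrix.smul_mulVec, dotProduct_smul] }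

noncomputable def conjCLM (F : Matrix (Fin n) (Fin n) ℝ) :
    Matrix (Fin n) (Fin n) ℝ →L[ℝ] Matrix (Fin n) (Fin n) ℝ :=
  LinearMap.toContinuousLinearMap
    { toFun := fun M => Fᵀ * M * F
      map_add' := by
        intro M N
        simp [Matrix.mul_add, Matrix.add_mul]
      map_smul' := by
        intro c M
        simp [Matrix.mul_smul, Matrix.smul_mul] }

example (f : ℕ → Matrix (Fin n) (Fin n) ℝ) (h : ∀ i j, Summable fun k => f k i j) :
    Summable f := by
  apply Pi.summable.mpr
  intro i
  apply Pi.summable.mpr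
  intro j
  exact h i j

lemma dotProduct_self_pos {x : Fin n → ℝ} (hx : x ≠ 0) : 0 < dotProduct x x := by
  have h1 : 0 ≤ dotProduct x x := Finset.sum_nonneg fun i _ => mul_self_nonneg _
  rcases h1.lt_or_eq with h | h
  · exact h
  · exact absurd (dotProduct_self_eq_zero.mp h.symm) hx

lemma lyap (F : Matrix (Fin n) (Fin n) ℝ)
    (hd : ∃ r : ℝ, 0 ≤ r ∧ r < 1 ∧ ∃ N : ℕ, ∀ k, N ≤ k → ∀ i j, |(F ^ k) i j| ≤ r ^ k) :
    ∃ P : Matrix (Fin n) (Fin n) ℝ, P.PosDef ∧ (P - Fᵀ * P * F).PosDef := by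
  obtain ⟨r, hr0, hr1, N, hbd⟩ := hd
  set M : ℕ → Matrix (Fin n) (Fin n) ℝ := fun k => (F ^ k)ᵀ * F ^ k with hM
  have hent : ∀ i j, Summable fun k => M k i j := by
    intro i j
    rw [← summable_nat_add_iff N]
    apply Summable.of_norm_bounded (g := fun k => (n * r ^ (2 * N)) * (r ^ 2) ^ k)
    · exact (summable_geometric_of_lt_one (by positivity) (by nlinarith)).mul_left _
    · intro k
      have hent2 : M (k + N) i j = ∑ l, (F ^ (k + N)) l i * (F ^ (k + N)) l j := by
        rw [hM]
        simp only [Matrix.mul_apply, Matrix.transpose_apply]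
      rw [Real.norm_eq_abs, hent2]
      calc |∑ l, (F ^ (k + N)) l i * (F ^ (k + N)) l j|
          ≤ ∑ l, |(F ^ (k + N)) l i * (F ^ (k + N)) l j| := Finset.abs_sum_le_sum_abs _ _
        _ ≤ ∑ _l : Fin n, r ^ (k + N) * r ^ (k + N) := by
            refine Finset.sum_le_sum fun l _ => ?_
            rw [abs_mul]
            have h1 := hbd (k + N) (by omega) l i
            have h2 := hbd (k + N) (by omega) l j
            have := mul_le_mul h1 h2 (abs_nonneg _) (by positivity)
            exact this
        _ = n * (r ^ (k + N) * r ^ (k + N)) := by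
            rw [Finset.sum_const, Finset.card_univ, Fintype.card_fin, nsmul_eq_mul]
        _ = n * r ^ (2 * N) * (r ^ 2) ^ k := by ring
  have hMsum : Summable M := Pi.summable.mpr fun i => Pi.summable.mpr fun j => hent i j
  set P := ∑' k, M k with hP
  have hquad : ∀ x : Fin n → ℝ, dotProduct x (P *ᵥ x) = ∑' k, dotProduct x (M k *ᵥ x) :=
    fun x => ContinuousLinearMap.map_tsum (quadCLM x) hMsum
  have hterm : ∀ (x : Fin n → ℝ) k,
      dotProduct x (M k *ᵥ x) = dotProduct (F ^ k *ᵥ x) (F ^ k *ᵥ x) := by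
    intro x k
    rw [hM]
    rw [← Matrix.mulVec_mulVec, Matrix.dotProduct_mulVec, Matrix.vecMul_transpose]
  have hsum' : ∀ x : Fin n → ℝ, Summable fun k => dotProduct x (M k *ᵥ x) := fun x =>
    hMsum.map (quadCLM x).toLinearMap.toAddMonoidHom (quadCLM x).continuous
  have hpos : ∀ x : Fin n → ℝ, x ≠ 0 → 0 < dotProduct x (P *ᵥ x) := by
    intro x hx
    rw [hquad]
    have h0 : dotProduct x (M 0 *ᵥ x) = dotProduct x x := by
      simp [hM]
    calc (0:ℝ) < dotProduct x (M 0 *ᵥ x) := by rw [h0]; exact dotProduct_self_pos hx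
      _ ≤ ∑' k, dotProduct x (M k *ᵥ x) := by
          refine (hsum' x).le_tsum 0 fun k _ => ?_
          rw [hterm]
          exact Finset.sum_nonneg fun i _ => mul_self_nonneg _
  have hMk : ∀ k, (M k)ᵀ = M k := by
    intro k
    rw [hM]
    simp [Matrix.transpose_mul]
  have hHerm : P.IsHermitian := by
    rw [Matrix.IsHermitian, Matrix.conjTranspose_eq_transpose_of_trivial, hP,
      Matrix.transpose_tsum]
    exact tsum_congr fun k => hMk k
  have h2 : ∀ k, Fᵀ * M k * F = M (k + 1) := by
    intro k
    rw [hM]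
    simp only [pow_succ, Matrix.transpose_mul, Matrix.mul_assoc]
  have hlyap : Fᵀ * P * F = P - 1 := by
    have h1 : Fᵀ * P * F = ∑' k, (Fᵀ * M k * F) :=
      ContinuousLinearMap.map_tsum (conjCLM F) hMsum
    have h3 := Summable.tsum_eq_zero_add hMsum
    have h4 : M 0 = 1 := by simp [hM]
    rw [h1]
    rw [show (fun k => Fᵀ * M k * F) = fun k => M (k + 1) from funext h2]
    rw [h4] at h3
    rw [← hP] at h3
    rw [eq_sub_iff_add_eq, add_comm]
    exact h3.symm
  refine ⟨P, PosDef.of_dotProduct_mulVec_pos hHerm fun x hx => by simpa [star_trivial] using hpos x hx, ?_⟩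
  rw [hlyap, sub_sub_cancel]
  exact Matrix.PosDef.one


/-- Discrete-time Luenberger observer design LMI: `A − LC` is Schur stable iff
there are `P ≻ 0` (symmetric) and `K` with
`[[P, AᵀP − CᵀKᵀ], [PA − KC, P]] ≻ 0` and `L = P⁻¹K`. -/
theorem stmt18 {n m : ℕ}
    (A : Matrix (Fin n) (Fin n) ℝ) (C : Matrix (Fin m) (Fin n) ℝ)
    (L : Matrix (Fin n) (Fin m) ℝ) :
    IsSchur (A - L * C) ↔
      ∃ (P : Matrix (Fin n) (Fin n) ℝ) (K : Matrix (Fin n) (Fin m) ℝ),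
        P.PosDef ∧
        (Matrix.fromBlocks P (Aᵀ * P - Cᵀ * Kᵀ) (P * A - K * C) P).PosDef ∧
        L = P⁻¹ * K := by
  constructor
  · intro hS
    obtain ⟨P, hP, hQ⟩ := lyap (A - L * C) (decay (A - L * C) hS)
    haveI : Invertible P := P.invertibleOfIsUnitDet ((Matrix.isUnit_iff_isUnit_det P).mp hP.isUnit)
    have hPsymm : Pᵀ = P := by
      have h := hP.1
      rwa [Matrix.IsHermitian, Matrix.conjTranspose_eq_transpose_of_trivial] at h
    refine ⟨P, P * L, hP, ?_, ?_⟩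
    · have e1 : Aᵀ * P - Cᵀ * (P * L)ᵀ = (A - L * C)ᵀ * P := by
        rw [Matrix.transpose_mul, hPsymm, Matrix.transpose_sub, Matrix.transpose_mul,
          Matrix.sub_mul, Matrix.mul_assoc]
      have e2 : P * A - (P * L) * C = P * (A - L * C) := by
        rw [Matrix.mul_sub, Matrix.mul_assoc]
      rw [e1, e2]
      have hBH : ((A - L * C)ᵀ * P)ᴴ = P * (A - L * C) := by
        rw [Matrix.conjTranspose_eq_transpose_of_trivial, Matrix.transpose_mul, hPsymm,
          Matrix.transpose_transpose]
      rw [show P * (A - L * C) = ((A - L * C)ᵀ * P)ᴴ from hBH.symm]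
      refine (posDef_fromBlocks₂₂ ((A - L * C)ᵀ * P) hP).mpr ?_
      have e3 : (A - L * C)ᵀ * P * P⁻¹ * ((A - L * C)ᵀ * P)ᴴ =
          (A - L * C)ᵀ * P * (A - L * C) := by
        rw [hBH, Matrix.mul_assoc ((A - L * C)ᵀ) P P⁻¹, Matrix.mul_inv_of_invertible,
          Matrix.mul_one, Matrix.mul_assoc, ← Matrix.mul_assoc]
      rw [e3]
      exact hQ
    · rw [Matrix.inv_mul_cancel_left_of_invertible]
  · rintro ⟨P, K, hP, hBlock, hL⟩
    haveI : Invertible P := P.invertibleOfIsUnitDet ((Matrix.isUnit_iff_isUnit_det P).mp hP.isUnit)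
    have hPsymm : Pᵀ = P := by
      have h := hP.1
      rwa [Matrix.IsHermitian, Matrix.conjTranspose_eq_transpose_of_trivial] at h
    have hK : K = P * L := by rw [hL, Matrix.mul_inv_cancel_left_of_invertible]
    rw [hK] at hBlock
    have e1 : Aᵀ * P - Cᵀ * (P * L)ᵀ = (A - L * C)ᵀ * P := by
      rw [Matrix.transpose_mul, hPsymm, Matrix.transpose_sub, Matrix.transpose_mul,
        Matrix.sub_mul, Matrix.mul_assoc]
    have e2 : P * A - (P * L) * C = P * (A - L * C) := by
      rw [Matrix.mul_sub, Matrix.mul_assoc]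
    rw [e1, e2] at hBlock
    have hBH : ((A - L * C)ᵀ * P)ᴴ = P * (A - L * C) := by
      rw [Matrix.conjTranspose_eq_transpose_of_trivial, Matrix.transpose_mul, hPsymm,
        Matrix.transpose_transpose]
    rw [show P * (A - L * C) = ((A - L * C)ᵀ * P)ᴴ from hBH.symm] at hBlock
    have hQ := (posDef_fromBlocks₂₂ ((A - L * C)ᵀ * P) hP).mp hBlock
    have e3 : (A - L * C)ᵀ * P * P⁻¹ * ((A - L * C)ᵀ * P)ᴴ =
        (A - L * C)ᵀ * P * (A - L * C) := by
      rw [hBH, Matrix.mul_assoc ((A - L * C)ᵀ) P P⁻¹, Matrix.mul_inv_of_invertible,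
        Matrix.mul_one, Matrix.mul_assoc, ← Matrix.mul_assoc]
    rw [e3] at hQ
    exact schur_of_lyap hP hQ
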